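/- Let p be a prime number and let k be a natural number with 1 ≤ k ≤ p. Write Epi(k,i) for the number of surjective functions from Fin k to Fin i, regarded as an integer. Then the ideal of ℤ generated by p together with the elements Epi(k,i) − Epi(p,i) for all i with 1 ≤ i ≤ p equals the ideal of ℤ generated by p together with the elements Epi(k,i) for all i with 2 ≤ i ≤ p. -/
import Mathlib

def epiZ (k i : ℕ) : ℤ :=
  (Fintype.card {f : Fin k → Fin i // Function.Surjective f} : ℤ)

lemma epiZ_one {k : ℕ} (hk : 1 ≤ k) : epiZ k 1 = 1 := by
  unfold epiZ
  norm_cast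
  rw [Fintype.card_eq_one_iff]
  refine ⟨⟨fun _ => 0, fun y => ⟨⟨0, by omega⟩, Subsingleton.elim (α := Fin 1) _ _⟩⟩, ?_⟩
  rintro ⟨f, hf⟩
  refine Subtype.ext (funext fun x => Subsingleton.elim (α := Fin 1) _ _)

section action
variable (p i : ℕ)

instance actSurj : MulAction (Multiplicative (ZMod p))
    {f : ZMod p → Fin i // Function.Surjective f} where
  smul g f := ⟨fun x => f.1 (g.toAdd + x), fun y => by
    obtain ⟨x, hx⟩ := f.2 y
    exact ⟨x - g.toAdd, by simpa using hx⟩⟩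
  one_smul f := by
    refine Subtype.ext (funext fun x => ?_)
    show f.1 _ = f.1 x; simp
  mul_smul g h f := by
    refine Subtype.ext (funext fun x => ?_)
    show f.1 (Multiplicative.toAdd (g * h) + x) = f.1 (h.toAdd + (g.toAdd + x))
    congr 1
    simp [add_comm, add_assoc, add_left_comm]

@[simp] lemma actSurj_smul_apply (g : Multiplicative (ZMod p))
    (f : {f : ZMod p → Fin i // Function.Surjective f}) (x : ZMod p) :
    (g • f).1 x = f.1 (g.toAdd + x) := rfl

lemma card_surj_congr [NeZero p] :
    Fintype.card {f : Fin p → Fin i // Function.Surjective f} =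
    Fintype.card {f : ZMod p → Fin i // Function.Surjective f} := by
  have e : ZMod p ≃ Fin p := Fintype.equivFinOfCardEq (ZMod.card p)
  apply Fintype.card_congr
  refine Equiv.subtypeEquiv (Equiv.arrowCongr e.symm (Equiv.refl _)) ?_
  intro f
  constructor
  · intro hf
    exact hf.comp (Equiv.surjective _)
  · intro hf y
    obtain ⟨x, hx⟩ := hf y
    exact ⟨e.symm.symm x, by simpa [Equiv.arrowCongr] using hx⟩

lemma prime_dvd_epiZ {p i : ℕ} (hp : p.Prime) (hi : 2 ≤ i) : (p : ℤ) ∣ epiZ p i := by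
  have : Fact p.Prime := ⟨hp⟩
  have : NeZero p := ⟨hp.pos.ne'⟩
  unfold epiZ
  rw [card_surj_congr p i]
  norm_cast
  have hG : IsPGroup p (Multiplicative (ZMod p)) :=
    IsPGroup.of_card (n := 1) (by rw [Nat.card_eq_fintype_card, Fintype.card_multiplicative, ZMod.card, pow_one])
  have hfix : IsEmpty (MulAction.fixedPoints (Multiplicative (ZMod p)) {f : ZMod p → Fin i // Function.Surjective f}) := by
    constructor
    rintro ⟨⟨f, hf⟩, hfx⟩
    have hconst : ∀ x : ZMod p, f x = f 0 := by
      intro x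
      have h := hfx (Multiplicative.ofAdd x)
      simpa using congrFun (congrArg Subtype.val h) 0
    obtain ⟨x0, hx0⟩ := hf ⟨0, by omega⟩
    obtain ⟨x1, hx1⟩ := hf ⟨1, by omega⟩
    have : (⟨0, by omega⟩ : Fin i) = ⟨1, by omega⟩ := by
      rw [← hx0, ← hx1, hconst x0, hconst x1]
    simpa using this
  haveI := hfix
  have hmod := hG.card_modEq_card_fixedPoints {f : ZMod p → Fin i // Function.Surjective f}
  have h0 : Nat.card (MulAction.fixedPoints (Multiplicative (ZMod p)) {f : ZMod p → Fin i // Function.Surjective f}) = 0 :=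
    Nat.card_of_isEmpty
  rw [h0] at hmod
  have := (Nat.modEq_zero_iff_dvd).mp hmod
  rwa [Nat.card_eq_fintype_card] at this

end action

/-- For a prime `p` and `1 ≤ k ≤ p`, the ideal of `ℤ` generated by `p` together with
`Epi(k,i) - Epi(p,i)` for `1 ≤ i ≤ p` equals the ideal generated by `p` together with
`Epi(k,i)` for `2 ≤ i ≤ p`. -/
theorem stmt_2 (p : ℕ) (hp : p.Prime) (k : ℕ) (hk1 : 1 ≤ k) (hkp : k ≤ p) :
    Ideal.span (insert (p : ℤ)
        {x : ℤ | ∃ i : ℕ, 1 ≤ i ∧ i ≤ p ∧ x = epiZ k i - epiZ p i}) =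
    Ideal.span (insert (p : ℤ)
        {x : ℤ | ∃ i : ℕ, 2 ≤ i ∧ i ≤ p ∧ x = epiZ k i}) := by
  have hmemp : ∀ S : Set ℤ, (p : ℤ) ∈ Ideal.span (insert (p : ℤ) S) :=
    fun S => Ideal.subset_span (Set.mem_insert _ _)
  apply le_antisymm <;> rw [Ideal.span_le] <;> rintro x (rfl | ⟨i, hi1, hi2, rfl⟩)
  · exact hmemp _
  · rcases eq_or_lt_of_le hi1 with h1 | h2
    · rw [← h1, epiZ_one hk1, epiZ_one hp.one_le, sub_self]
      exact Ideal.zero_mem _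
    · have hdvd : (p : ℤ) ∣ epiZ p i := prime_dvd_epiZ hp h2
      obtain ⟨c, hc⟩ := hdvd
      have h1 : epiZ k i ∈ Ideal.span (insert (p:ℤ) {x : ℤ | ∃ i : ℕ, 2 ≤ i ∧ i ≤ p ∧ x = epiZ k i}) :=
        Ideal.subset_span (Set.mem_insert_iff.mpr (Or.inr ⟨i, h2, hi2, rfl⟩))
      have h2' : epiZ p i ∈ Ideal.span (insert (p:ℤ) {x : ℤ | ∃ i : ℕ, 2 ≤ i ∧ i ≤ p ∧ x = epiZ k i}) := by
        rw [hc]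
        exact Ideal.mul_mem_right _ _ (hmemp _)
      exact Ideal.sub_mem _ h1 h2'
  · exact hmemp _
  · have hdvd : (p : ℤ) ∣ epiZ p i := prime_dvd_epiZ hp hi1
    obtain ⟨c, hc⟩ := hdvd
    have h1 : epiZ k i - epiZ p i ∈ Ideal.span (insert (p:ℤ) {x : ℤ | ∃ i : ℕ, 1 ≤ i ∧ i ≤ p ∧ x = epiZ k i - epiZ p i}) :=
      Ideal.subset_span (Set.mem_insert_iff.mpr (Or.inr ⟨i, by omega, hi2, rfl⟩))
    have h2' : epiZ p i ∈ Ideal.span (insert (p:ℤ) {x : ℤ | ∃ i : ℕ, 1 ≤ i ∧ i ≤ p ∧ x = epiZ k i - epiZ p i}) := by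
      rw [hc]; exact Ideal.mul_mem_right _ _ (hmemp _)
    have := Ideal.add_mem _ h1 h2'
    simpa using this
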